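/- arXiv:1110.5447 — 4 statements merged into one kernel-verified Lean document; each statement's English description precedes it below -/
import Mathlib

section
/- The expected bias of the Good-Turing estimator of the missing mass of interesting items satisfies -1/n ≤ E[R_n - Û_n/n] ≤ 0, where R_n = ∑_{x∈A} P(x)·1{x unseen in X_1,…,X_n} and U_n is the number of x∈A appearing exactly once among X_1,…,X_n. -/
open scoped Classical
open MeasureTheory Finset
open scoped ENNReal NNReal

private lemma gt_key_ineq (p : ℝ) (hp0 : 0 ≤ p) (hp1 : p ≤ 1) (n : ℕ) (hn : 1 ≤ n) :
    (n : ℝ) * (p * (1-p)^(n-1)) ≤ 1 := by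
  have h0 : (0:ℝ) ≤ 1 - p := by linarith
  have h1 : (1:ℝ) - p ≤ 1 := by linarith
  have hsum : (n:ℝ) * (1-p)^(n-1) ≤ ∑ k ∈ Finset.range n, (1-p)^k := by
    calc (n:ℝ) * (1-p)^(n-1) = ∑ k ∈ Finset.range n, (1-p)^(n-1) := by
          rw [Finset.sum_const, Finset.card_range]; ring
      _ ≤ ∑ k ∈ Finset.range n, (1-p)^k := by
          apply Finset.sum_le_sum
          intro k hk
          simp only [Finset.mem_range] at hk
          exact pow_le_pow_of_le_one h0 h1 (by omega : k ≤ n - 1)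
  have hgeo : p * ∑ k ∈ Finset.range n, (1-p)^k = 1 - (1-p)^n := by
    have := geom_sum_mul (1-p) n
    nlinarith [this]
  nlinarith [pow_nonneg h0 n, mul_le_mul_of_nonneg_left hsum hp0]

private lemma gt_S0_eq {Ω : Type*} (n : ℕ) (x : Ω) :
    {X : Fin n → Ω | ∀ m, X m ≠ x} = Set.pi Set.univ (fun _ => ({x}ᶜ : Set Ω)) := by
  ext X; simp [Set.mem_pi]

private lemma gt_S1_eq {Ω : Type*} (n : ℕ) (x : Ω) :
    {X : Fin n → Ω | ∃! m, X m = x}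
      = ⋃ m, Set.pi Set.univ (fun k => if k = m then ({x} : Set Ω) else {x}ᶜ) := by
  ext X
  simp only [Set.mem_setOf_eq, Set.mem_iUnion, Set.mem_pi, Set.mem_univ, true_implies]
  constructor
  · rintro ⟨m, hm, hu⟩
    refine ⟨m, fun k => ?_⟩
    by_cases hk : k = m
    · simp [hk, hm]
    · simp only [hk, if_neg hk, Set.mem_compl_iff, Set.mem_singleton_iff]
      exact fun h => hk (hu k h)
  · rintro ⟨m, hm⟩
    refine ⟨m, ?_, fun k hk => ?_⟩
    · have := hm m; simpa using this
    · by_contra hkm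
      have := hm k; simp [if_neg hkm, hk] at this

private lemma gt_S0_meas {Ω : Type*} [MeasurableSpace Ω] [MeasurableSingletonClass Ω]
    (n : ℕ) (x : Ω) : MeasurableSet {X : Fin n → Ω | ∀ m, X m ≠ x} := by
  rw [gt_S0_eq]
  exact MeasurableSet.pi (Set.to_countable _) fun k _ => (measurableSet_singleton x).compl

private lemma gt_S1_meas {Ω : Type*} [MeasurableSpace Ω] [MeasurableSingletonClass Ω]
    (n : ℕ) (x : Ω) : MeasurableSet {X : Fin n → Ω | ∃! m, X m = x} := by
  rw [gt_S1_eq]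
  exact MeasurableSet.iUnion fun m => MeasurableSet.pi (Set.to_countable _) fun k _ => by
    by_cases hk : k = m <;> simp [hk, (measurableSet_singleton x).compl]

private lemma gt_meas_S0 {Ω : Type*} [MeasurableSpace Ω] [MeasurableSingletonClass Ω]
    (P : PMF Ω) (n : ℕ) (x : Ω) :
    (Measure.pi fun _ : Fin n => P.toMeasure) {X | ∀ m, X m ≠ x} = (1 - P x)^n := by
  have hc : P.toMeasure ({x}ᶜ) = 1 - P x := by
    rw [measure_compl (measurableSet_singleton x) (measure_ne_top _ _),
      P.toMeasure_apply_singleton x (measurableSet_singleton x)]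
    simp
  rw [gt_S0_eq, Measure.pi_pi]
  simp [hc]

private lemma gt_meas_S1 {Ω : Type*} [MeasurableSpace Ω] [MeasurableSingletonClass Ω]
    (P : PMF Ω) (n : ℕ) (x : Ω) :
    (Measure.pi fun _ : Fin n => P.toMeasure) {X | ∃! m, X m = x}
      = n * P x * (1 - P x)^(n-1) := by
  set S : Fin n → Set (Fin n → Ω) :=
    fun m => Set.pi Set.univ (fun k => if k = m then ({x} : Set Ω) else {x}ᶜ) with hS
  have hmeas : ∀ m, MeasurableSet (S m) := by
    intro m
    exact MeasurableSet.pi (Set.to_countable _) fun k _ => by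
      by_cases hk : k = m <;> simp [hk, (measurableSet_singleton x).compl]
  have hdisj : Pairwise (Function.onFun Disjoint S) := by
    intro m m' hmm'
    rw [Function.onFun, Set.disjoint_left]
    intro X hX hX'
    have h1 := hX m (Set.mem_univ m)
    have h2 := hX' m (Set.mem_univ m)
    simp only [if_pos rfl] at h1
    simp only [if_neg hmm'] at h2
    exact h2 h1
  have hc : P.toMeasure ({x}ᶜ) = 1 - P x := by
    rw [measure_compl (measurableSet_singleton x) (measure_ne_top _ _),
      P.toMeasure_apply_singleton x (measurableSet_singleton x)]
    simp
  have hone : ∀ m, (Measure.pi fun _ : Fin n => P.toMeasure) (S m)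
      = P x * (1 - P x)^(n-1) := by
    intro m
    rw [hS, Measure.pi_pi]
    rw [← Finset.mul_prod_erase Finset.univ _ (Finset.mem_univ m)]
    have h1 : P.toMeasure (if m = m then ({x} : Set Ω) else {x}ᶜ) = P x := by
      simp [P.toMeasure_apply_singleton x (measurableSet_singleton x)]
    rw [h1]
    congr 1
    have : ∀ k ∈ Finset.univ.erase m,
        P.toMeasure (if k = m then ({x} : Set Ω) else {x}ᶜ) = 1 - P x := by
      intro k hk
      rw [if_neg (Finset.ne_of_mem_erase hk), hc]
    rw [Finset.prod_congr rfl this, Finset.prod_const,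
      Finset.card_erase_of_mem (Finset.mem_univ m)]
    simp
  rw [gt_S1_eq, measure_iUnion hdisj hmeas, tsum_fintype]
  simp [hone, Finset.sum_const, mul_assoc]

/-- The expected bias of the Good-Turing estimator of the missing mass of interesting
items satisfies `-1/n ≤ E[R_n - U_n/n] ≤ 0`, where, for an i.i.d. sample
`X_1, …, X_n` from a distribution `P` on a countable set `Ω`,
`R_n = ∑_{x ∈ A} P(x)·1{x unseen}` and `U_n = #{x ∈ A : x seen exactly once}`. -/
theorem goodTuring_bias_bounds
    {Ω : Type*} [Countable Ω] [MeasurableSpace Ω] [MeasurableSingletonClass Ω]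
    (P : PMF Ω) (A : Set Ω) (n : ℕ) (hn : 1 ≤ n)
    (μ : Measure (Fin n → Ω)) (hμ : μ = Measure.pi fun _ => P.toMeasure)
    (R U : (Fin n → Ω) → ℝ)
    (hR : ∀ X, R X = ∑' x : Ω,
      (if x ∈ A ∧ ∀ m : Fin n, X m ≠ x then (P x).toReal else 0))
    (hU : ∀ X, U X = ∑' x : Ω,
      (if x ∈ A ∧ ∃! m : Fin n, X m = x then (1 : ℝ) else 0)) :
    -(1 / (n : ℝ)) ≤ (∫ X, (R X - U X / n) ∂μ) ∧ (∫ X, (R X - U X / n) ∂μ) ≤ 0 := by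
  subst hμ
  set μ : Measure (Fin n → Ω) := Measure.pi fun _ => P.toMeasure with hμdef
  have hprob : IsProbabilityMeasure μ := inferInstance
  have hn0 : (n:ℝ) ≠ 0 := Nat.cast_ne_zero.mpr (by omega)
  set p : Ω → ℝ := fun x => (P x).toReal with hpdef
  have hp0 : ∀ x, 0 ≤ p x := fun x => ENNReal.toReal_nonneg
  have hple : ∀ x, P x ≤ 1 := fun x => P.coe_le_one x
  have hpt : ∀ x, P x ≠ ⊤ := fun x => ne_top_of_le_ne_top ENNReal.one_ne_top (hple x)
  have hp1 : ∀ x, p x ≤ 1 := by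
    intro x
    have := ENNReal.toReal_mono ENNReal.one_ne_top (hple x)
    simpa using this
  have hsum_p : Summable p := ENNReal.summable_toReal (by rw [P.tsum_coe]; exact ENNReal.one_ne_top)
  have htsum_p : ∑' x, p x = 1 := by
    rw [hpdef, ← ENNReal.tsum_toReal_eq hpt, P.tsum_coe, ENNReal.toReal_one]
  set S0 : Ω → Set (Fin n → Ω) := fun x => {X | ∀ m, X m ≠ x} with hS0def
  set S1 : Ω → Set (Fin n → Ω) := fun x => {X | ∃! m, X m = x} with hS1def
  have hS0m : ∀ x, MeasurableSet (S0 x) := fun x => gt_S0_meas n x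
  have hS1m : ∀ x, MeasurableSet (S1 x) := fun x => gt_S1_meas n x
  have h1q : ∀ x, (1 - P x).toReal = 1 - p x := by
    intro x
    rw [ENNReal.toReal_sub_of_le (hple x) ENNReal.one_ne_top, ENNReal.toReal_one]
  set h : Ω → (Fin n → Ω) → ℝ := fun x X =>
    if x ∈ A then (S0 x).indicator (fun _ => p x) X - (S1 x).indicator (fun _ => (1:ℝ)) X / n
    else 0 with hhdef
  -- pointwise identity
  have hpt1 : ∀ X, R X - U X / n = ∑' x, h x X := by
    intro X
    rw [hR X, hU X]
    have hfR : Summable (fun x => if x ∈ A ∧ ∀ m : Fin n, X m ≠ x then p x else 0) := by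
      apply Summable.of_nonneg_of_le _ _ hsum_p
      · intro x; split <;> simp [hp0]
      · intro x; split <;> simp [hp0]
    have hfU : Summable (fun x => if x ∈ A ∧ ∃! m : Fin n, X m = x then (1:ℝ) else 0) := by
      apply summable_of_ne_finset_zero (s := Finset.univ.image X)
      intro x hx
      rw [if_neg]
      rintro ⟨-, m, hm, -⟩
      exact hx (Finset.mem_image.2 ⟨m, Finset.mem_univ m, hm⟩)
    rw [← tsum_div_const, ← Summable.tsum_sub hfR (hfU.div_const _)]
    apply tsum_congr
    intro x
    by_cases hxA : x ∈ A
    · simp only [hhdef, if_pos hxA, hxA, true_and, Set.indicator_apply, hS0def, hS1def,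
        Set.mem_setOf_eq]
    · simp [hhdef, hxA]
  -- value of each integral
  have hint : ∀ x, ∫ X, h x X ∂μ
      = if x ∈ A then p x * (1 - p x)^n - p x * (1 - p x)^(n-1) else 0 := by
    intro x
    by_cases hxA : x ∈ A
    · simp only [hhdef, if_pos hxA]
      rw [integral_sub ((integrable_const (p x)).indicator (hS0m x))
        (((integrable_const (1:ℝ)).indicator (hS1m x)).div_const _)]
      rw [integral_div, integral_indicator_const _ (hS0m x), integral_indicator_const _ (hS1m x)]
      have hm0 : μ (S0 x) = (1 - P x)^n := gt_meas_S0 P n x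
      have hm1 : μ (S1 x) = n * P x * (1 - P x)^(n-1) := gt_meas_S1 P n x
      rw [measureReal_def, measureReal_def, hm0, hm1]
      rw [ENNReal.toReal_pow, h1q x]
      rw [ENNReal.toReal_mul, ENNReal.toReal_mul, ENNReal.toReal_pow, h1q x,
        ENNReal.toReal_natCast]
      rw [smul_eq_mul, smul_eq_mul, mul_one]
      field_simp
      ring
    · simp [hhdef, hxA]
  -- measurability
  have hmeash : ∀ x, AEStronglyMeasurable (h x) μ := by
    intro x
    by_cases hxA : x ∈ A
    · simp only [hhdef, if_pos hxA]
      exact ((measurable_const.indicator (hS0m x)).sub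
        ((measurable_const.indicator (hS1m x)).div_const _)).aestronglyMeasurable
    · simp only [hhdef, if_neg hxA]
      exact aestronglyMeasurable_const
  -- L1 bound
  have hnorm : ∀ x, ∫⁻ X, (‖h x X‖₊ : ℝ≥0∞) ∂μ ≤ 2 * P x := by
    intro x
    by_cases hxA : x ∈ A
    · simp only [hhdef, if_pos hxA]
      have step1 : ∫⁻ X, (‖(S0 x).indicator (fun _ => p x) X
            - (S1 x).indicator (fun _ => (1:ℝ)) X / n‖₊ : ℝ≥0∞) ∂μ
          ≤ (∫⁻ X, (‖(S0 x).indicator (fun _ => p x) X‖₊ : ℝ≥0∞) ∂μ)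
            + ∫⁻ X, (‖(S1 x).indicator (fun _ => (1:ℝ)) X / n‖₊ : ℝ≥0∞) ∂μ := by
        rw [← lintegral_add_left']
        · apply lintegral_mono
          intro X
          dsimp only
          exact_mod_cast nnnorm_sub_le _ _
        · exact ((measurable_const.indicator (hS0m x)).nnnorm.coe_nnreal_ennreal).aemeasurable
      have e0 : ∫⁻ X, (‖(S0 x).indicator (fun _ => p x) X‖₊ : ℝ≥0∞) ∂μ ≤ P x := by
        have : (fun X => (‖(S0 x).indicator (fun _ => p x) X‖₊ : ℝ≥0∞))
            = (S0 x).indicator (fun _ => (‖p x‖₊ : ℝ≥0∞)) := by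
          funext X
          simp only [Set.indicator_apply]
          split <;> simp
        rw [this, lintegral_indicator (hS0m x), setLIntegral_const]
        have hval : (‖p x‖₊ : ℝ≥0∞) = P x := by
          rw [hpdef, ← enorm_eq_nnnorm, Real.enorm_eq_ofReal ENNReal.toReal_nonneg,
            ENNReal.ofReal_toReal (hpt x)]
        rw [hval]
        calc P x * μ (S0 x) ≤ P x * 1 := by
              exact mul_le_mul_right prob_le_one _
          _ = P x := mul_one _
      have e1 : ∫⁻ X, (‖(S1 x).indicator (fun _ => (1:ℝ)) X / n‖₊ : ℝ≥0∞) ∂μ ≤ P x := by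
        have : (fun X => (‖(S1 x).indicator (fun _ => (1:ℝ)) X / n‖₊ : ℝ≥0∞))
            = (S1 x).indicator (fun _ => (‖(1:ℝ)/n‖₊ : ℝ≥0∞)) := by
          funext X
          simp only [Set.indicator_apply]
          split <;> simp
        rw [this, lintegral_indicator (hS1m x), setLIntegral_const]
        have hval : (‖(1:ℝ)/(n:ℝ)‖₊ : ℝ≥0∞) = ((n:ℝ≥0∞))⁻¹ := by
          rw [← enorm_eq_nnnorm, Real.enorm_eq_ofReal (by positivity)]
          rw [ENNReal.ofReal_div_of_pos (by exact_mod_cast Nat.pos_of_ne_zero (by omega))]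
          simp [ENNReal.ofReal_natCast, one_div]
        rw [hval, gt_meas_S1 P n x]
        calc ((n:ℝ≥0∞))⁻¹ * (n * P x * (1 - P x)^(n-1))
            ≤ ((n:ℝ≥0∞))⁻¹ * (n * P x * 1) := by
              exact mul_le_mul_right (mul_le_mul_right (pow_le_one' tsub_le_self _) _) _
          _ = P x := by
              rw [mul_one, ← mul_assoc,
                ENNReal.inv_mul_cancel (by exact_mod_cast Nat.pos_of_ne_zero (by omega) : (0:ℝ≥0∞) < (n:ℝ≥0∞)).ne' (ENNReal.natCast_ne_top n), one_mul]
      calc _ ≤ _ := step1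
        _ ≤ P x + P x := add_le_add e0 e1
        _ = 2 * P x := by ring
    · simp only [hhdef, if_neg hxA]
      simp
  have hbound : ∑' x, ∫⁻ X, (‖h x X‖₊ : ℝ≥0∞) ∂μ ≠ ⊤ := by
    apply ne_top_of_le_ne_top _ (ENNReal.tsum_le_tsum hnorm)
    rw [ENNReal.tsum_mul_left, P.tsum_coe, mul_one]
    exact ENNReal.ofNat_ne_top
  -- the integral
  have hI : ∫ X, (R X - U X / n) ∂μ
      = ∑' x, (if x ∈ A then p x * (1-p x)^n - p x * (1-p x)^(n-1) else 0) := by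
    calc ∫ X, (R X - U X / n) ∂μ = ∫ X, ∑' x, h x X ∂μ := by
          apply integral_congr_ae
          filter_upwards with X using hpt1 X
      _ = ∑' x, ∫ X, h x X ∂μ := integral_tsum hmeash hbound
      _ = _ := tsum_congr hint
  set v : Ω → ℝ := fun x => if x ∈ A then p x * (1-p x)^n - p x * (1-p x)^(n-1) else 0
    with hvdef
  have hpow : ∀ x, (1 - p x)^n = (1 - p x)^(n-1) * (1 - p x) := by
    intro x
    rw [← pow_succ]
    congr 1
    omega
  have hq0 : ∀ x, (0:ℝ) ≤ 1 - p x := fun x => by linarith [hp1 x]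
  have hvle : ∀ x, v x ≤ 0 := by
    intro x
    by_cases hxA : x ∈ A
    · simp only [hvdef, if_pos hxA]
      rw [hpow x]
      nlinarith [mul_nonneg (mul_nonneg (hp0 x) (hp0 x)) (pow_nonneg (hq0 x) (n-1))]
    · simp [hvdef, hxA]
  have hnpos : (0:ℝ) < n := by
    have : 0 < n := by omega
    exact_mod_cast this
  have hvge : ∀ x, -(p x / n) ≤ v x := by
    intro x
    by_cases hxA : x ∈ A
    · simp only [hvdef, if_pos hxA]
      rw [hpow x]
      have hk := gt_key_ineq (p x) (hp0 x) (hp1 x) n hn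
      rw [neg_le, neg_sub]
      calc p x * (1-p x)^(n-1) - p x * ((1-p x)^(n-1) * (1-p x))
          = p x * (p x * (1-p x)^(n-1)) := by ring
        _ ≤ p x * ((n:ℝ)⁻¹) := by
            apply mul_le_mul_of_nonneg_left _ (hp0 x)
            rw [inv_eq_one_div, le_div_iff₀ hnpos]
            linarith [hk]
        _ = p x / n := by rw [div_eq_mul_inv]
    · simp only [hvdef, if_neg hxA]
      have : 0 ≤ p x / n := by positivity
      linarith
  have hsv : Summable v := by
    have hnegv : Summable (fun x => -v x) := by
      apply Summable.of_nonneg_of_le (fun x => by linarith [hvle x])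
        (fun x => by linarith [hvge x]) (hsum_p.div_const n)
    simpa using hnegv.neg
  constructor
  · rw [hI]
    have : -(1/(n:ℝ)) = ∑' x, -(p x / n) := by
      rw [tsum_neg, tsum_div_const, htsum_p]
    rw [this]
    exact Summable.tsum_le_tsum hvge ((hsum_p.div_const n).neg) hsv
  · rw [hI]
    exact tsum_nonpos hvle
end

section
/- The function f(x_1,…,x_n) = R_n - U_n/n (missing mass minus the Good-Turing estimate, viewed as a deterministic function of the sample) satisfies the bounded differences property with constant 2/n + p_max in each coordinate, where p_max = max_x P(x). -/
open scoped Classical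

/-- The function `f(x_1,…,x_n) = R_n - U_n/n` (missing mass minus the Good-Turing
estimate, viewed as a deterministic function of the sample) satisfies the bounded
differences property with constant `2/n + p_max` in each coordinate, where
`p_max = sup_x P(x)`. -/
theorem goodTuring_bounded_differences
    {Ω : Type*} [Countable Ω] (P : PMF Ω) (A : Set Ω) (n : ℕ) (hn : 1 ≤ n)
    (pmax : ℝ) (hpmax : pmax = ⨆ x : Ω, (P x).toReal)
    (f : (Fin n → Ω) → ℝ)
    (hf : ∀ X, f X =
      (∑' x : Ω, (if x ∈ A ∧ ∀ m : Fin n, X m ≠ x then (P x).toReal else 0)) -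
      (∑' x : Ω, (if x ∈ A ∧ ∃! m : Fin n, X m = x then (1 : ℝ) else 0)) / n)
    (X X' : Fin n → Ω) (l : Fin n) (hXX' : ∀ m : Fin n, m ≠ l → X m = X' m) :
    |f X - f X'| ≤ 2 / (n : ℝ) + pmax := by
  have hn0 : (0:ℝ) < n := by exact_mod_cast hn
  have hbdd : BddAbove (Set.range fun x : Ω => (P x).toReal) := by
    refine ⟨1, ?_⟩
    rintro r ⟨x, rfl⟩
    calc (P x).toReal ≤ (1 : ENNReal).toReal :=
          ENNReal.toReal_mono ENNReal.one_ne_top (P.coe_le_one x)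
      _ = 1 := by simp
  have hPle : ∀ x : Ω, (P x).toReal ≤ pmax := by
    intro x; rw [hpmax]; exact le_ciSup hbdd x
  have hpmax0 : 0 ≤ pmax := le_trans ENNReal.toReal_nonneg (hPle (X l))
  have hrhs0 : 0 ≤ 2 / (n:ℝ) + pmax := by positivity
  by_cases hab : X l = X' l
  · have hXeq : X = X' := funext fun m => by
      by_cases hm : m = l
      · subst hm; exact hab
      · exact hXX' m hm
    rw [hXeq]; simpa using hrhs0
  · let g : (Fin n → Ω) → Ω → ℝ :=
      fun Y x => if x ∈ A ∧ ∀ m : Fin n, Y m ≠ x then (P x).toReal else 0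
    let h : (Fin n → Ω) → Ω → ℝ :=
      fun Y x => if x ∈ A ∧ ∃! m : Fin n, Y m = x then (1:ℝ) else 0
    have hgnn : ∀ Y x, 0 ≤ g Y x := by
      intro Y x; dsimp only [g]; split
      · exact ENNReal.toReal_nonneg
      · exact le_refl 0
    have hgleP : ∀ Y x, g Y x ≤ (P x).toReal := by
      intro Y x; dsimp only [g]; split
      · exact le_refl _
      · exact ENNReal.toReal_nonneg
    have hgle : ∀ Y x, g Y x ≤ pmax := fun Y x => (hgleP Y x).trans (hPle x)
    have hhnn : ∀ Y x, 0 ≤ h Y x := by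
      intro Y x; dsimp only [h]; split <;> norm_num
    have hhle : ∀ Y x, h Y x ≤ 1 := by
      intro Y x; dsimp only [h]; split <;> norm_num
    have hPsum : Summable fun x : Ω => (P x).toReal :=
      ENNReal.summable_toReal (by rw [P.tsum_coe]; exact ENNReal.one_ne_top)
    have hgsum : ∀ Y, Summable (g Y) :=
      fun Y => Summable.of_nonneg_of_le (hgnn Y) (hgleP Y) hPsum
    have hhsum : ∀ Y : Fin n → Ω, Summable (h Y) := by
      intro Y
      apply summable_of_ne_finset_zero (s := Finset.image Y Finset.univ)
      intro x hx
      dsimp only [h]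
      rw [if_neg]
      rintro ⟨-, m, hm, -⟩
      exact hx (Finset.mem_image.2 ⟨m, Finset.mem_univ m, hm⟩)
    have hgx : ∀ x, x ∉ ({X l, X' l} : Finset Ω) → g X x = g X' x := by
      intro x hx
      simp only [Finset.mem_insert, Finset.mem_singleton, not_or] at hx
      obtain ⟨hxa, hxb⟩ := hx
      have hiff : (∀ m : Fin n, X m ≠ x) ↔ (∀ m : Fin n, X' m ≠ x) := by
        constructor
        · intro H m
          by_cases hm : m = l
          · subst hm; exact fun hc => hxb hc.symm
          · rw [← hXX' m hm]; exact H m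
        · intro H m
          by_cases hm : m = l
          · subst hm; exact fun hc => hxa hc.symm
          · rw [hXX' m hm]; exact H m
      dsimp only [g]
      exact if_congr (and_congr_right fun _ => hiff) rfl rfl
    have hhx : ∀ x, x ∉ ({X l, X' l} : Finset Ω) → h X x = h X' x := by
      intro x hx
      simp only [Finset.mem_insert, Finset.mem_singleton, not_or] at hx
      obtain ⟨hxa, hxb⟩ := hx
      have hiff : (∃! m : Fin n, X m = x) ↔ (∃! m : Fin n, X' m = x) := by
        constructor
        · rintro ⟨m, hm, hu⟩
          have hml : m ≠ l := by rintro rfl; exact hxa hm.symm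
          refine ⟨m, by show X' m = x; rw [← hXX' m hml]; exact hm, ?_⟩
          intro m' hm'
          have hm'l : m' ≠ l := by rintro rfl; exact hxb hm'.symm
          exact hu m' (by show X m' = x; rw [hXX' m' hm'l]; exact hm')
        · rintro ⟨m, hm, hu⟩
          have hml : m ≠ l := by rintro rfl; exact hxb hm.symm
          refine ⟨m, by show X m = x; rw [hXX' m hml]; exact hm, ?_⟩
          intro m' hm'
          have hm'l : m' ≠ l := by rintro rfl; exact hxa hm'.symm
          exact hu m' (by show X' m' = x; rw [← hXX' m' hm'l]; exact hm')
      dsimp only [h]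
      exact if_congr (and_congr_right fun _ => hiff) rfl rfl
    have hRd : (∑' x, g X x) - (∑' x, g X' x)
        = ∑ x ∈ ({X l, X' l} : Finset Ω), (g X x - g X' x) := by
      rw [← Summable.tsum_sub (hgsum X) (hgsum X')]
      exact tsum_eq_sum fun x hx => sub_eq_zero.2 (hgx x hx)
    have hUd : (∑' x, h X x) - (∑' x, h X' x)
        = ∑ x ∈ ({X l, X' l} : Finset Ω), (h X x - h X' x) := by
      rw [← Summable.tsum_sub (hhsum X) (hhsum X')]
      exact tsum_eq_sum fun x hx => sub_eq_zero.2 (hhx x hx)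
    have hgXa : g X (X l) = 0 := by
      dsimp only [g]; rw [if_neg]; rintro ⟨-, H⟩; exact H l rfl
    have hgX'b : g X' (X' l) = 0 := by
      dsimp only [g]; rw [if_neg]; rintro ⟨-, H⟩; exact H l rfl
    have hRabs : |(∑' x, g X x) - (∑' x, g X' x)| ≤ pmax := by
      rw [hRd, Finset.sum_pair hab, hgXa, hgX'b]
      rw [abs_le]
      constructor
      · have h1 := hgnn X' (X l); have h2 := hgle X (X' l)
        have h3 := hgle X' (X l); have h4 := hgnn X (X' l); linarith
      · have h1 := hgnn X' (X l); have h2 := hgle X (X' l)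
        have h3 := hgle X' (X l); have h4 := hgnn X (X' l); linarith
    have hUabs : |(∑' x, h X x) - (∑' x, h X' x)| ≤ 2 := by
      rw [hUd, Finset.sum_pair hab]
      rw [abs_le]
      constructor
      · have := hhle X' (X l); have := hhnn X (X l)
        have := hhle X' (X' l); have := hhnn X (X' l); linarith
      · have := hhle X (X l); have := hhnn X' (X l)
        have := hhle X (X' l); have := hhnn X' (X' l); linarith
    have hfX : f X = (∑' x, g X x) - (∑' x, h X x) / n := hf X
    have hfX' : f X' = (∑' x, g X' x) - (∑' x, h X' x) / n := hf X'
    have hdiff : f X - f X' =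
        ((∑' x, g X x) - (∑' x, g X' x)) -
        ((∑' x, h X x) - (∑' x, h X' x)) / n := by
      rw [hfX, hfX']; ring
    rw [hdiff]
    calc |((∑' x, g X x) - (∑' x, g X' x)) -
          ((∑' x, h X x) - (∑' x, h X' x)) / n|
        ≤ |(∑' x, g X x) - (∑' x, g X' x)| +
          |((∑' x, h X x) - (∑' x, h X' x)) / n| := abs_sub _ _
      _ ≤ pmax + 2 / n := by
          refine add_le_add hRabs ?_
          rw [abs_div, abs_of_nonneg hn0.le]
          gcongr
      _ = 2 / n + pmax := by ring
end

section
/- Fix q_1 ≥ ⋯ ≥ q_K > 0 and t ≥ 0, and consider minimizing r(ν) = ∑_{i=1}^K q_i·exp(−ν_i) over ν ∈ ℝ^K subject to ν_1+⋯+ν_K = t and ν_i ≥ 0. Then there exists I(t) ∈ {1,…,K} such that the optimum is attained at ν_i* = t/I(t) + log(q_i/\underline{q}_{I(t)}) for i ≤ I(t) and ν_i* = 0 for i > I(t), where \underline{q}_m = (q_1⋯q_m)^{1/m} is the geometric mean; and the optimal value is r*(t) = I(t)·\underline{q}_{I(t)}·exp(−t/I(t)) + ∑_{i>I(t)} q_i.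 -/
open Finset Real
open scoped Classical

/-- Minimizing `r(ν) = ∑ i q_i e^{−ν_i}` over `ν ≥ 0` with `∑ ν_i = t`: there is an
`I(t) ∈ {1,…,K}` such that the optimum is `ν_i* = t/I(t) + log(q_i/q̲_{I(t)})` for
`i ≤ I(t)` and `ν_i* = 0` for `i > I(t)`, where `q̲_m` is the geometric mean of
`q_1,…,q_m`; the optimal value is `I(t)·q̲_{I(t)}·e^{−t/I(t)} + ∑_{i>I(t)} q_i`. -/
theorem open_loop_optimal_allocation
    (K : ℕ) (hK : 1 ≤ K) (q : Fin K → ℝ) (hpos : ∀ i, 0 < q i)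
    (hsorted : ∀ i j : Fin K, i ≤ j → q j ≤ q i)
    (t : ℝ) (ht : 0 ≤ t)
    (gm : ℕ → ℝ)
    (hgm : ∀ m : ℕ, 1 ≤ m → m ≤ K →
      gm m = Real.exp ((1 / (m : ℝ)) *
        ∑ i ∈ Finset.univ.filter (fun i : Fin K => (i : ℕ) < m), Real.log (q i))) :
    ∃ I : ℕ, 1 ≤ I ∧ I ≤ K ∧
      ∃ ν : Fin K → ℝ,
        (∀ i : Fin K, ν i =
          if (i : ℕ) < I then t / I + Real.log (q i / gm I) else 0) ∧
        (∀ i, 0 ≤ ν i) ∧ (∑ i, ν i = t) ∧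
        (∀ w : Fin K → ℝ, (∀ i, 0 ≤ w i) → (∑ i, w i = t) →
          ∑ i, q i * Real.exp (-ν i) ≤ ∑ i, q i * Real.exp (-w i)) ∧
        ∑ i, q i * Real.exp (-ν i) =
          (I : ℝ) * gm I * Real.exp (-t / I) +
            ∑ i ∈ Finset.univ.filter (fun i : Fin K => I ≤ (i : ℕ)), q i := by
  classical
  -- basic summation lemma : sums over `{i : Fin K | i < m}` equal sums over `range m`
  have key : ∀ (f : ℕ → ℝ) (m : ℕ), m ≤ K →
      ∑ i ∈ Finset.univ.filter (fun i : Fin K => (i : ℕ) < m), f (i : ℕ)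
        = ∑ j ∈ Finset.range m, f j := by
    intro f m hm
    rw [Finset.sum_filter]
    rw [Fin.sum_univ_eq_sum_range (fun j => if j < m then f j else 0) K]
    rw [← Finset.sum_subset (Finset.range_subset_range.2 hm)
      (fun j hj hj2 => if_neg (fun h => hj2 (Finset.mem_range.2 h)))]
    exact Finset.sum_congr rfl (fun j hj => if_pos (Finset.mem_range.1 hj))
  set F : ℕ → ℝ := fun n => if h : n < K then Real.log (q ⟨n, h⟩) else 0 with hF
  have hFq : ∀ i : Fin K, Real.log (q i) = F (i : ℕ) := by
    intro i; simp [hF, i.isLt]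
  set S : ℕ → ℝ := fun m => ∑ j ∈ Finset.range m, F j with hSdef
  have hSeq : ∀ m, m ≤ K →
      ∑ i ∈ Finset.univ.filter (fun i : Fin K => (i : ℕ) < m), Real.log (q i) = S m := by
    intro m hm
    calc ∑ i ∈ Finset.univ.filter (fun i : Fin K => (i : ℕ) < m), Real.log (q i)
        = ∑ i ∈ Finset.univ.filter (fun i : Fin K => (i : ℕ) < m), F (i : ℕ) :=
          Finset.sum_congr rfl (fun i _ => hFq i)
      _ = ∑ j ∈ Finset.range m, F j := key F m hm
      _ = S m := rfl
  set L : ℕ → ℝ := fun m => (S m - t) / m with hLdef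
  set P : ℕ → Prop := fun m => 1 ≤ m ∧ m ≤ K ∧ L m ≤ F (m - 1) with hPdef
  have hP1 : P 1 := by
    refine ⟨le_refl 1, hK, ?_⟩
    have h1 : S 1 = F 0 := by simp [hSdef]
    have h2 : L 1 = F 0 - t := by simp [hLdef, h1]
    show L 1 ≤ F 0
    rw [h2]; linarith
  set I := Nat.findGreatest P K with hIdef
  have hIge : 1 ≤ I := Nat.le_findGreatest hK hP1
  have hIK : I ≤ K := Nat.findGreatest_le K
  have hPI : P I := Nat.findGreatest_spec hK hP1
  have hIposN : 0 < I := hIge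
  have hIpos : (0 : ℝ) < (I : ℝ) := by exact_mod_cast hIposN
  have hIne : (I : ℝ) ≠ 0 := ne_of_gt hIpos
  have hLmul : ∀ m : ℕ, 1 ≤ m → (m : ℝ) * L m = S m - t := by
    intro m hm
    have hm0 : (m : ℝ) ≠ 0 := Nat.cast_ne_zero.2 (by omega)
    simp only [hLdef]
    field_simp
  have hLI : (I : ℝ) * L I = S I - t := hLmul I hIge
  -- lower bound : for indices below I, log (q i) ≥ L I
  have hLlow : ∀ i : Fin K, (i : ℕ) < I → L I ≤ Real.log (q i) := by
    intro i hi
    have hm1 : I - 1 < K := by omega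
    have hFI : F (I - 1) = Real.log (q ⟨I - 1, hm1⟩) := by simp [hF, hm1]
    have hle : q ⟨I - 1, hm1⟩ ≤ q i := by
      apply hsorted i ⟨I - 1, hm1⟩
      simp only [Fin.le_def]
      omega
    calc L I ≤ F (I - 1) := hPI.2.2
      _ = Real.log (q ⟨I - 1, hm1⟩) := hFI
      _ ≤ Real.log (q i) := Real.log_le_log (hpos _) hle
  -- upper bound : for indices at or above I, log (q i) ≤ L I
  have hLhigh : ∀ i : Fin K, I ≤ (i : ℕ) → Real.log (q i) ≤ L I := by
    intro i hi
    have hIK' : I < K := lt_of_le_of_lt hi i.isLt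
    have hnot : ¬ P (I + 1) := Nat.findGreatest_is_greatest (Nat.lt_succ_self I) (by omega)
    have h1 : F I < L (I + 1) := by
      by_contra h
      exact hnot ⟨by omega, by omega, by simpa using not_lt.1 h⟩
    have hSucc : S (I + 1) = S I + F I := by
      simp [hSdef, Finset.sum_range_succ]
    have hL1 : ((I : ℝ) + 1) * L (I + 1) = S I + F I - t := by
      have h := hLmul (I + 1) (by omega)
      push_cast at h
      rw [hSucc] at h
      linarith
    have hFLI : F I < L I := by
      have hmul : ((I : ℝ) + 1) * F I < ((I : ℝ) + 1) * L (I + 1) := by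
        apply mul_lt_mul_of_pos_left h1; positivity
      rw [hL1] at hmul
      have h3 : (I : ℝ) * F I < (I : ℝ) * L I := by linarith [hLI]
      exact lt_of_mul_lt_mul_left h3 hIpos.le
    have hFIq : F I = Real.log (q ⟨I, hIK'⟩) := by simp [hF, hIK']
    have hle : q i ≤ q ⟨I, hIK'⟩ := hsorted ⟨I, hIK'⟩ i (by
      simp only [Fin.le_def]; exact hi)
    calc Real.log (q i) ≤ Real.log (q ⟨I, hIK'⟩) := Real.log_le_log (hpos _) hle
      _ = F I := hFIq.symm
      _ ≤ L I := hFLI.le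
  -- the geometric mean at I
  have hgmI : gm I = Real.exp ((1 / (I : ℝ)) * S I) := by
    rw [hgm I hIge hIK, hSeq I hIK]
  have hgmpos : 0 < gm I := by rw [hgmI]; exact Real.exp_pos _
  have hloggm : Real.log (gm I) = (1 / (I : ℝ)) * S I := by
    rw [hgmI, Real.log_exp]
  -- the candidate allocation
  set ν : Fin K → ℝ :=
    fun i => if (i : ℕ) < I then t / I + Real.log (q i / gm I) else 0 with hν
  have hνlt : ∀ i : Fin K, (i : ℕ) < I → ν i = Real.log (q i) - L I := by
    intro i hi
    rw [hν]; simp only [if_pos hi]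
    rw [Real.log_div (ne_of_gt (hpos i)) (ne_of_gt hgmpos), hloggm, hLdef]
    field_simp
    ring
  have hνge : ∀ i : Fin K, I ≤ (i : ℕ) → ν i = 0 := by
    intro i hi; rw [hν]; simp [not_lt.2 hi]
  -- nonnegativity
  have hν0 : ∀ i, 0 ≤ ν i := by
    intro i
    by_cases hi : (i : ℕ) < I
    · rw [hνlt i hi]; linarith [hLlow i hi]
    · rw [hνge i (not_lt.1 hi)]
  -- sum constraint
  have hfilter_not : Finset.univ.filter (fun i : Fin K => ¬ (i : ℕ) < I)
      = Finset.univ.filter (fun i : Fin K => I ≤ (i : ℕ)) := by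
    apply Finset.filter_congr; intro i _; simp [not_lt]
  have hsum : ∑ i, ν i = t := by
    rw [← Finset.sum_filter_add_sum_filter_not Finset.univ (fun i : Fin K => (i : ℕ) < I) ν]
    have h2 : ∑ i ∈ Finset.univ.filter (fun i : Fin K => ¬ (i : ℕ) < I), ν i = 0 := by
      apply Finset.sum_eq_zero
      intro i hi
      exact hνge i (not_lt.1 (Finset.mem_filter.1 hi).2)
    have h1 : ∑ i ∈ Finset.univ.filter (fun i : Fin K => (i : ℕ) < I), ν i
        = ∑ j ∈ Finset.range I, (F j - L I) := by
      rw [← key (fun n => F n - L I) I hIK]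
      apply Finset.sum_congr rfl
      intro i hi
      have hi' : (i : ℕ) < I := (Finset.mem_filter.1 hi).2
      rw [hνlt i hi', hFq i]
    have hSI : ∑ j ∈ Finset.range I, F j = S I := rfl
    rw [h1, h2, Finset.sum_sub_distrib, Finset.sum_const, Finset.card_range, hSI,
      nsmul_eq_mul]
    linarith [hLI]
  -- the Lagrange multiplier
  set lam : ℝ := Real.exp (L I) with hlam
  have hclt : ∀ i : Fin K, (i : ℕ) < I → q i * Real.exp (-ν i) = lam := by
    intro i hi
    rw [hνlt i hi, hlam, neg_sub, Real.exp_sub, Real.exp_log (hpos i)]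
    rw [mul_div_assoc', mul_comm, mul_div_assoc, div_self (ne_of_gt (hpos i)), mul_one]
  have hcge : ∀ i : Fin K, I ≤ (i : ℕ) → q i * Real.exp (-ν i) = q i := by
    intro i hi; rw [hνge i hi]; simp
  have hqlam : ∀ i : Fin K, I ≤ (i : ℕ) → q i ≤ lam := by
    intro i hi
    calc q i = Real.exp (Real.log (q i)) := (Real.exp_log (hpos i)).symm
      _ ≤ Real.exp (L I) := Real.exp_le_exp.2 (hLhigh i hi)
  -- the value of the objective at ν
  have hvalue : ∑ i, q i * Real.exp (-ν i)
      = (I : ℝ) * lam + ∑ i ∈ Finset.univ.filter (fun i : Fin K => I ≤ (i : ℕ)), q i := by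
    rw [← Finset.sum_filter_add_sum_filter_not Finset.univ (fun i : Fin K => (i : ℕ) < I)
      (fun i => q i * Real.exp (-ν i))]
    congr 1
    · have h1 : ∑ i ∈ Finset.univ.filter (fun i : Fin K => (i : ℕ) < I),
          q i * Real.exp (-ν i) = ∑ j ∈ Finset.range I, lam := by
        rw [← key (fun _ => lam) I hIK]
        exact Finset.sum_congr rfl (fun i hi => hclt i (Finset.mem_filter.1 hi).2)
      rw [h1, Finset.sum_const, Finset.card_range, nsmul_eq_mul]
    · rw [hfilter_not]
      exact Finset.sum_congr rfl (fun i hi => hcge i (Finset.mem_filter.1 hi).2)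
  have hlameq : lam = gm I * Real.exp (-t / I) := by
    rw [hlam, hgmI, ← Real.exp_add]
    congr 1
    simp only [hLdef]
    ring
  refine ⟨I, hIge, hIK, ν, fun i => rfl, hν0, hsum, ?_, by rw [hvalue, hlameq]; ring⟩
  -- optimality
  intro w hw0 hwsum
  have hterm : ∀ i : Fin K,
      (q i * Real.exp (-ν i)) * (1 + (ν i - w i)) ≤ q i * Real.exp (-w i) := by
    intro i
    have hexp : Real.exp (-w i) = Real.exp (-ν i) * Real.exp (ν i - w i) := by
      rw [← Real.exp_add]; ring_nf
    have h1 : (1 : ℝ) + (ν i - w i) ≤ Real.exp (ν i - w i) := by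
      have := Real.add_one_le_exp (ν i - w i); linarith
    have hA : 0 < q i * Real.exp (-ν i) := mul_pos (hpos i) (Real.exp_pos _)
    calc (q i * Real.exp (-ν i)) * (1 + (ν i - w i))
        ≤ (q i * Real.exp (-ν i)) * Real.exp (ν i - w i) :=
          mul_le_mul_of_nonneg_left h1 hA.le
      _ = q i * Real.exp (-w i) := by rw [hexp]; ring
  have hgap : 0 ≤ ∑ i, (q i * Real.exp (-ν i)) * (ν i - w i) := by
    have hsplit : ∑ i, (q i * Real.exp (-ν i)) * (ν i - w i)
        = lam * (∑ i, ν i - ∑ i, w i)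
          + ∑ i, (q i * Real.exp (-ν i) - lam) * (ν i - w i) := by
      rw [← Finset.sum_sub_distrib, Finset.mul_sum, ← Finset.sum_add_distrib]
      exact Finset.sum_congr rfl (fun i _ => by ring)
    rw [hsplit, hsum, hwsum, sub_self, mul_zero, zero_add]
    apply Finset.sum_nonneg
    intro i _
    by_cases hi : (i : ℕ) < I
    · rw [hclt i hi, sub_self, zero_mul]
    · have hi' : I ≤ (i : ℕ) := not_lt.1 hi
      rw [hcge i hi', hνge i hi']
      have := hqlam i hi'
      have := hw0 i
      nlinarith
  calc ∑ i, q i * Real.exp (-ν i)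
      ≤ ∑ i, q i * Real.exp (-ν i) + ∑ i, (q i * Real.exp (-ν i)) * (ν i - w i) := by
        linarith
    _ = ∑ i, (q i * Real.exp (-ν i)) * (1 + (ν i - w i)) := by
        rw [← Finset.sum_add_distrib]
        exact Finset.sum_congr rfl (fun i _ => by ring)
    _ ≤ ∑ i, q i * Real.exp (-w i) := Finset.sum_le_sum (fun i _ => hterm i)
end

section
/- In the two-expert case (K = 2) with q_1 ≥ q_2 > 0, the threshold time after which the optimal open-loop allocation uses both experts is t_1 = log(q_1/q_2): for t ≤ log(q_1/q_2) the minimum of q_1·e^{−ν_1} + q_2·e^{−ν_2} subject to ν_1+ν_2 = t, ν_i ≥ 0 is attained at ν = (t, 0), and for t ≥ log(q_1/q_2) at ν_1 = t/2 + (1/2)log(q_1/q_2), ν_2 = t/2 − (1/2)log(q_1/q_2). -/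
open Real

/-- Two-expert case: the threshold time after which the optimal open-loop allocation
uses both experts is `t₁ = log(q₁/q₂)`.  For `t ≤ log(q₁/q₂)` the minimum of
`q₁e^{−ν₁} + q₂e^{−ν₂}` over `ν₁+ν₂ = t`, `ν ≥ 0` is attained at `(t,0)`; for
`t ≥ log(q₁/q₂)` it is attained at `(t/2 + ½log(q₁/q₂), t/2 − ½log(q₁/q₂))`. -/
theorem two_expert_threshold
    (q1 q2 : ℝ) (h2 : 0 < q2) (h12 : q2 ≤ q1) (t : ℝ) (ht : 0 ≤ t) :
    (t ≤ Real.log (q1 / q2) →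
      ∀ ν1 ν2 : ℝ, 0 ≤ ν1 → 0 ≤ ν2 → ν1 + ν2 = t →
        q1 * Real.exp (-t) + q2 * Real.exp (-(0 : ℝ)) ≤
          q1 * Real.exp (-ν1) + q2 * Real.exp (-ν2)) ∧
    (Real.log (q1 / q2) ≤ t →
      ∀ ν1 ν2 : ℝ, 0 ≤ ν1 → 0 ≤ ν2 → ν1 + ν2 = t →
        q1 * Real.exp (-(t / 2 + Real.log (q1 / q2) / 2)) +
          q2 * Real.exp (-(t / 2 - Real.log (q1 / q2) / 2)) ≤
          q1 * Real.exp (-ν1) + q2 * Real.exp (-ν2)) := by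
  have h1 : 0 < q1 := lt_of_lt_of_le h2 h12
  have hdiv : 0 < q1 / q2 := div_pos h1 h2
  have hexplog : Real.exp (Real.log (q1 / q2)) = q1 / q2 := Real.exp_log hdiv
  constructor
  · intro hle ν1 ν2 hν1 hν2 hsum
    -- exp(-t) ≥ exp(-log(q1/q2)) = q2/q1
    have hkey : q2 ≤ q1 * Real.exp (-t) := by
      have : Real.exp (-Real.log (q1 / q2)) ≤ Real.exp (-t) :=
        Real.exp_le_exp.mpr (by linarith)
      rw [Real.exp_neg, hexplog] at this
      calc q2 = q1 * (q1 / q2)⁻¹ := by field_simp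
        _ ≤ q1 * Real.exp (-t) := by
            exact mul_le_mul_of_nonneg_left this h1.le
    have hmono : Real.exp (-t) ≤ Real.exp (-ν1) :=
      Real.exp_le_exp.mpr (by linarith)
    have hkey2 : q2 ≤ q1 * Real.exp (-ν1) :=
      hkey.trans (mul_le_mul_of_nonneg_left hmono h1.le)
    have hsplit : Real.exp (-t) = Real.exp (-ν1) * Real.exp (-ν2) := by
      rw [← Real.exp_add]; ring_nf; rw [← hsum]; ring_nf
    have hexp2 : Real.exp (-ν2) ≤ 1 := Real.exp_le_one_iff.mpr (by linarith)
    have hexp2pos : 0 < Real.exp (-ν2) := Real.exp_pos _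
    rw [neg_zero, Real.exp_zero, hsplit]
    nlinarith [hkey2, hexp2, hexp2pos]
  · intro hge ν1 ν2 hν1 hν2 hsum
    set L := Real.log (q1 / q2) with hL
    set A := q1 * Real.exp (-(t / 2 + L / 2)) with hA
    set B := q2 * Real.exp (-(t / 2 - L / 2)) with hB
    set x := q1 * Real.exp (-ν1) with hx
    set y := q2 * Real.exp (-ν2) with hy
    have hApos : 0 < A := mul_pos h1 (Real.exp_pos _)
    have hxpos : 0 < x := mul_pos h1 (Real.exp_pos _)
    have hypos : 0 < y := mul_pos h2 (Real.exp_pos _)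
    have hAB : A = B := by
      rw [hA, hB]
      have : Real.exp (-(t / 2 + L / 2)) * Real.exp L = Real.exp (-(t / 2 - L / 2)) := by
        rw [← Real.exp_add]; ring_nf
      rw [← this, hexplog]
      field_simp
    have hemul : Real.exp (-(t / 2 + L / 2)) * Real.exp (-(t / 2 - L / 2))
        = Real.exp (-t) := by rw [← Real.exp_add]; ring_nf
    have hABsq : A * B = q1 * q2 * Real.exp (-t) := by
      rw [hA, hB, show q1 * Real.exp (-(t / 2 + L / 2)) * (q2 * Real.exp (-(t / 2 - L / 2)))
        = q1 * q2 * (Real.exp (-(t / 2 + L / 2)) * Real.exp (-(t / 2 - L / 2))) by ring,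
        hemul]
    have hxy : x * y = q1 * q2 * Real.exp (-t) := by
      rw [hx, hy, show q1 * Real.exp (-ν1) * (q2 * Real.exp (-ν2))
        = q1 * q2 * (Real.exp (-ν1) * Real.exp (-ν2)) by ring, ← Real.exp_add, ← hsum]
      ring_nf
    have hxyA : x * y = A * A := by rw [hxy, ← hABsq, ← hAB]
    nlinarith [sq_nonneg (x - A), hxpos, hxyA]
end
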